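/- A universe 𝔘 of finite connected hypergraphs is of the form 𝔘_𝐑 = { 𝐑_X : X ⊆ R finite nonempty, 𝐑_X connected } for some hypergraph 𝐑 if and only if: (1) any two hypergraphs in 𝔘 with the same carrier are equal; (2) if e is a hyperedge of some 𝐇 ∈ 𝔘 and 𝐆 ∈ 𝔘 has e ⊆ G, then e is a hyperedge of 𝐆; (3) if 𝐇 ∈ 𝔘 and X ⊆ H is such that 𝐇_X is connected, then some 𝐆 ∈ 𝔘 has carrier X; (4) if 𝐇₁, 𝐇₂ ∈ 𝔘 have intersecting carriers, then there is 𝐇 ∈ 𝔘 with 𝐇₁ ∪ 𝐇₂ ⊆ 𝐇. -/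

import Mathlib

/-! Basic hypergraph notions (following Došen–Petrić / Curien–Obradović–Ivanović). -/

variable {α : Type*}

/-- `ConnIn E X`: the restriction of the edge set `E` to `X` is connected, i.e. every
nontrivial partition of `X` is crossed by an edge of `E` lying inside `X`. -/
def ConnIn (E : Set (Set α)) (X : Set α) : Prop :=
  ∀ X₁ X₂ : Set α, X₁ ∪ X₂ = X → Disjoint X₁ X₂ → X₁.Nonempty → X₂.Nonempty →
    ∃ e ∈ E, e ⊆ X ∧ ¬ e ⊆ X₁ ∧ ¬ e ⊆ X₂

/-- An atomic hypergraph: a carrier set together with a set of nonempty hyperedges covering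
the carrier and containing all singletons. -/
structure Hypergraph' (α : Type*) where
  carrier : Set α
  edges : Set (Set α)
  edges_nonempty : ∀ e ∈ edges, e.Nonempty
  edges_sub : ∀ e ∈ edges, e ⊆ carrier
  atomic : ∀ x ∈ carrier, {x} ∈ edges

/-- A subset `X` is connected in the hypergraph `G`. -/
def Hypergraph'.ConnectedIn (G : Hypergraph' α) (X : Set α) : Prop := ConnIn G.edges X

/-- The hypergraph `G` is connected. -/
def Hypergraph'.Connected (G : Hypergraph' α) : Prop := G.ConnectedIn G.carrier

/-- Restriction of a hypergraph to a subset. -/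
def Hypergraph'.restrict (G : Hypergraph' α) (X : Set α) : Hypergraph' α where
  carrier := G.carrier ∩ X
  edges := {e | e ∈ G.edges ∧ e ⊆ X}
  edges_nonempty := fun e he => G.edges_nonempty e he.1
  edges_sub := fun e he => Set.subset_inter (G.edges_sub e he.1) he.2
  atomic := fun x hx => ⟨G.atomic x hx.1, Set.singleton_subset_iff.2 hx.2⟩

/-- `Y` is a connected component of the hypergraph `G`: a maximal nonempty connected subset
of the carrier. -/
def IsCC (G : Hypergraph' α) (Y : Set α) : Prop :=
  Y.Nonempty ∧ Y ⊆ G.carrier ∧ G.ConnectedIn Y ∧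
    ∀ Z, Y ⊆ Z → Z ⊆ G.carrier → G.ConnectedIn Z → Z = Y

/-- A universe: a collection of finite connected hypergraphs with nonempty carriers. -/
def IsUniverse (U : Set (Hypergraph' α)) : Prop :=
  ∀ G ∈ U, G.carrier.Finite ∧ G.carrier.Nonempty ∧ G.Connected

lemma Hypergraph'.ext' {G₁ G₂ : Hypergraph' α} (h1 : G₁.carrier = G₂.carrier)
    (h2 : G₁.edges = G₂.edges) : G₁ = G₂ := by
  cases G₁; cases G₂; simp_all

lemma restrict_carrier (R : Hypergraph' α) {X : Set α} (hX : X ⊆ R.carrier) :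
    (R.restrict X).carrier = X := Set.inter_eq_right.mpr hX

lemma connIn_mono {E E' : Set (Set α)} {X : Set α} (hEE : E ⊆ E') (h : ConnIn E X) :
    ConnIn E' X := by
  intro Y₁ Y₂ hun hdis h1 h2
  obtain ⟨e, he, h⟩ := h Y₁ Y₂ hun hdis h1 h2
  exact ⟨e, hEE he, h⟩

lemma connIn_union {E : Set (Set α)} {X₁ X₂ : Set α} (h₁ : ConnIn E X₁) (h₂ : ConnIn E X₂)
    (hne : (X₁ ∩ X₂).Nonempty) : ConnIn E (X₁ ∪ X₂) := by
  obtain ⟨x, hx1, hx2⟩ := hne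
  -- key : for a connected piece `W` containing `x` and meeting `Y₂`
  have key : ∀ W Y₁ Y₂ : Set α, ConnIn E W → W ⊆ X₁ ∪ X₂ → x ∈ W →
      Y₁ ∪ Y₂ = X₁ ∪ X₂ → Disjoint Y₁ Y₂ → x ∈ Y₁ → (W ∩ Y₂).Nonempty →
      ∃ e ∈ E, e ⊆ X₁ ∪ X₂ ∧ ¬ e ⊆ Y₁ ∧ ¬ e ⊆ Y₂ := by
    intro W Y₁ Y₂ hW hWsub hxW hun hdis hxY1 ⟨y, hyW, hyY2⟩
    have hcover : W ∩ Y₁ ∪ W ∩ Y₂ = W := by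
      rw [← Set.inter_union_distrib_left, hun]
      exact Set.inter_eq_left.mpr hWsub
    obtain ⟨e, heE, hesub, he1, he2⟩ := hW (W ∩ Y₁) (W ∩ Y₂) hcover
      (hdis.mono Set.inter_subset_right Set.inter_subset_right)
      ⟨x, hxW, hxY1⟩ ⟨y, hyW, hyY2⟩
    refine ⟨e, heE, hesub.trans hWsub, ?_, ?_⟩
    · exact fun h => he1 (Set.subset_inter hesub h)
    · exact fun h => he2 (Set.subset_inter hesub h)
  intro Y₁ Y₂ hun hdis h1 h2
  rcases (hun ▸ Set.mem_union_left X₂ hx1 : x ∈ Y₁ ∪ Y₂) with hxY | hxY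
  · obtain ⟨y, hy⟩ := h2
    have hyX : y ∈ X₁ ∪ X₂ := hun ▸ Set.mem_union_right Y₁ hy
    rcases hyX with hyX | hyX
    · exact key X₁ Y₁ Y₂ h₁ Set.subset_union_left hx1 hun hdis hxY ⟨y, hyX, hy⟩
    · exact key X₂ Y₁ Y₂ h₂ Set.subset_union_right hx2 hun hdis hxY ⟨y, hyX, hy⟩
  · obtain ⟨y, hy⟩ := h1
    have hyX : y ∈ X₁ ∪ X₂ := hun ▸ Set.mem_union_left Y₂ hy
    have hun' : Y₂ ∪ Y₁ = X₁ ∪ X₂ := by rw [Set.union_comm]; exact hun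
    rcases hyX with hyX | hyX
    · obtain ⟨e, heE, hs, ha, hb⟩ :=
        key X₁ Y₂ Y₁ h₁ Set.subset_union_left hx1 hun' hdis.symm hxY ⟨y, hyX, hy⟩
      exact ⟨e, heE, hs, hb, ha⟩
    · obtain ⟨e, heE, hs, ha, hb⟩ :=
        key X₂ Y₂ Y₁ h₂ Set.subset_union_right hx2 hun' hdis.symm hxY ⟨y, hyX, hy⟩
      exact ⟨e, heE, hs, hb, ha⟩

/-- A universe `U` is of the form `𝔘_R` (all connected restrictions of a hypergraph `R` to
finite nonempty subsets) if and only if: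
(1) members of `U` are determined by their carriers;
(2) a hyperedge of a member of `U` contained in the carrier of another member is a
hyperedge of that member;
(3) every nonempty connected subset of (the carrier of) a member is the carrier of a
member; and
(4) any two members with intersecting carriers are contained in a common member. -/
theorem stmt13 (U : Set (Hypergraph' α)) (hU : IsUniverse U) :
    (∃ R : Hypergraph' α, U = {G | ∃ X : Set α, X ⊆ R.carrier ∧ X.Finite ∧ X.Nonempty ∧
        (R.restrict X).Connected ∧ G = R.restrict X}) ↔
      ((∀ G₁ ∈ U, ∀ G₂ ∈ U, G₁.carrier = G₂.carrier → G₁ = G₂) ∧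
       (∀ G ∈ U, ∀ e ∈ G.edges, ∀ G' ∈ U, e ⊆ G'.carrier → e ∈ G'.edges) ∧
       (∀ G ∈ U, ∀ X : Set α, X.Nonempty → X ⊆ G.carrier → G.ConnectedIn X →
          ∃ G' ∈ U, G'.carrier = X) ∧
       (∀ G₁ ∈ U, ∀ G₂ ∈ U, (G₁.carrier ∩ G₂.carrier).Nonempty →
          ∃ G ∈ U, G₁.edges ⊆ G.edges ∧ G₂.edges ⊆ G.edges)) := by
  constructor
  · rintro ⟨R, rfl⟩
    refine ⟨?_, ?_, ?_, ?_⟩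
    · rintro G₁ ⟨X₁, hX₁R, _, _, _, rfl⟩ G₂ ⟨X₂, hX₂R, _, _, _, rfl⟩ hcar
      rw [restrict_carrier R hX₁R, restrict_carrier R hX₂R] at hcar
      rw [hcar]
    · rintro G ⟨X₁, hX₁R, _, _, _, rfl⟩ e he G' ⟨X₂, hX₂R, _, _, _, rfl⟩ hsub
      rw [restrict_carrier R hX₂R] at hsub
      exact ⟨he.1, hsub⟩
    · rintro G ⟨X₀, hX₀R, hfin, _, hconn, rfl⟩ X hXne hXsub hXconn
      rw [restrict_carrier R hX₀R] at hXsub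
      have hXR : X ⊆ R.carrier := hXsub.trans hX₀R
      have hconnX : (R.restrict X).Connected := by
        unfold Hypergraph'.Connected Hypergraph'.ConnectedIn
        rw [restrict_carrier R hXR]
        intro Y₁ Y₂ hun hdis h1 h2
        obtain ⟨e, ⟨heR, heX₀⟩, hs, ha, hb⟩ := hXconn Y₁ Y₂ hun hdis h1 h2
        exact ⟨e, ⟨heR, hs⟩, hs, ha, hb⟩
      exact ⟨R.restrict X, ⟨X, hXR, hfin.subset hXsub, hXne, hconnX, rfl⟩,
        restrict_carrier R hXR⟩
    · rintro G₁ ⟨X₁, hX₁R, hfin₁, hne₁, hconn₁, rfl⟩ G₂ ⟨X₂, hX₂R, hfin₂, hne₂, hconn₂, rfl⟩ hint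
      rw [restrict_carrier R hX₁R, restrict_carrier R hX₂R] at hint
      have hXR : X₁ ∪ X₂ ⊆ R.carrier := Set.union_subset hX₁R hX₂R
      have hmono₁ : (R.restrict X₁).edges ⊆ (R.restrict (X₁ ∪ X₂)).edges :=
        fun e he => ⟨he.1, he.2.trans Set.subset_union_left⟩
      have hmono₂ : (R.restrict X₂).edges ⊆ (R.restrict (X₁ ∪ X₂)).edges :=
        fun e he => ⟨he.1, he.2.trans Set.subset_union_right⟩
      have hc₁ : ConnIn (R.restrict (X₁ ∪ X₂)).edges X₁ := by
        have := hconn₁; unfold Hypergraph'.Connected Hypergraph'.ConnectedIn at this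
        rw [restrict_carrier R hX₁R] at this
        exact connIn_mono hmono₁ this
      have hc₂ : ConnIn (R.restrict (X₁ ∪ X₂)).edges X₂ := by
        have := hconn₂; unfold Hypergraph'.Connected Hypergraph'.ConnectedIn at this
        rw [restrict_carrier R hX₂R] at this
        exact connIn_mono hmono₂ this
      have hconn : (R.restrict (X₁ ∪ X₂)).Connected := by
        unfold Hypergraph'.Connected Hypergraph'.ConnectedIn
        rw [restrict_carrier R hXR]
        exact connIn_union hc₁ hc₂ hint
      exact ⟨R.restrict (X₁ ∪ X₂),
        ⟨X₁ ∪ X₂, hXR, hfin₁.union hfin₂, hne₁.mono Set.subset_union_left, hconn, rfl⟩,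
        hmono₁, hmono₂⟩
  · rintro ⟨h1, h2, h3, h4⟩
    set R : Hypergraph' α :=
      { carrier := ⋃ G ∈ U, G.carrier
        edges := ⋃ G ∈ U, G.edges
        edges_nonempty := by
          intro e he
          obtain ⟨G, hG, he⟩ := Set.mem_iUnion₂.mp he
          exact G.edges_nonempty e he
        edges_sub := by
          intro e he
          obtain ⟨G, hG, he⟩ := Set.mem_iUnion₂.mp he
          exact fun x hx => Set.mem_iUnion₂.mpr ⟨G, hG, G.edges_sub e he hx⟩
        atomic := by
          intro x hx
          obtain ⟨G, hG, hx⟩ := Set.mem_iUnion₂.mp hx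
          exact Set.mem_iUnion₂.mpr ⟨G, hG, G.atomic x hx⟩ } with hRdef
    have hedge_mem : ∀ G ∈ U, G.edges ⊆ R.edges := fun G hG e he => Set.mem_iUnion₂.mpr ⟨G, hG, he⟩
    have hcar_mem : ∀ G ∈ U, G.carrier ⊆ R.carrier := fun G hG x hx => Set.mem_iUnion₂.mpr ⟨G, hG, hx⟩
    -- For G ∈ U, the restriction of R to G.carrier is G itself
    have hres : ∀ G ∈ U, R.restrict G.carrier = G := by
      intro G hG
      apply Hypergraph'.ext'
      · exact restrict_carrier R (hcar_mem G hG)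
      · ext e
        constructor
        · rintro ⟨heR, hesub⟩
          obtain ⟨G', hG', he'⟩ := Set.mem_iUnion₂.mp heR
          exact h2 G' hG' e he' G hG hesub
        · intro he
          exact ⟨hedge_mem G hG he, G.edges_sub e he⟩
    refine ⟨R, ?_⟩
    ext G
    constructor
    · intro hG
      obtain ⟨hfin, hne, hconn⟩ := hU G hG
      refine ⟨G.carrier, hcar_mem G hG, hfin, hne, ?_, (hres G hG).symm⟩
      rw [hres G hG]; exact hconn
    · rintro ⟨X, hXR, hfin, hne, hconn, rfl⟩
      have hconn' : ConnIn (R.restrict X).edges X := by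
        have := hconn; unfold Hypergraph'.Connected Hypergraph'.ConnectedIn at this
        rwa [restrict_carrier R hXR] at this
      -- Step A: find G₀ ∈ U with X ⊆ G₀.carrier
      have stepA : ∃ G₀ ∈ U, X ⊆ G₀.carrier := by
        set T : Set (Set α) := {Y | Y ⊆ X ∧ Y.Nonempty ∧ ∃ G ∈ U, Y ⊆ G.carrier} with hT
        have hTfin : T.Finite := hfin.finite_subsets.subset (fun Y hY => hY.1)
        have hTne : T.Nonempty := by
          obtain ⟨x, hx⟩ := hne
          obtain ⟨G, hG, hxG⟩ := Set.mem_iUnion₂.mp (hXR hx)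
          exact ⟨{x}, Set.singleton_subset_iff.mpr hx, Set.singleton_nonempty x,
            G, hG, Set.singleton_subset_iff.mpr hxG⟩
        obtain ⟨Y, hYT, hmax⟩ : ∃ Y ∈ T, ∀ Y' ∈ T, id Y ≤ id Y' → id Y = id Y' := by
          obtain ⟨Y, hYT, hm⟩ := hTfin.exists_maximalFor id T hTne
          exact ⟨Y, hYT, fun Y' h' hle => le_antisymm hle (hm h' hle)⟩
        obtain ⟨hYX, hYne, G₀, hG₀, hYG₀⟩ := hYT
        by_cases hYeq : Y = X
        · exact ⟨G₀, hG₀, hYeq ▸ hYG₀⟩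
        · exfalso
          have hdne : (X \ Y).Nonempty := Set.diff_nonempty.mpr (fun h => hYeq
            (Set.Subset.antisymm hYX h))
          obtain ⟨e, ⟨heR, heX⟩, _, heY, hed⟩ := hconn' Y (X \ Y)
            (Set.union_diff_cancel hYX) Set.disjoint_sdiff_right hYne hdne
          obtain ⟨G', hG', heG'⟩ := Set.mem_iUnion₂.mp heR
          have hzY : ∃ z ∈ e, z ∈ Y := by
            by_contra h
            push_neg at h
            exact hed (fun z hz => ⟨heX hz, h z hz⟩)
          obtain ⟨z, hze, hzY⟩ := hzY
          have hint : (G₀.carrier ∩ G'.carrier).Nonempty :=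
            ⟨z, hYG₀ hzY, G'.edges_sub e heG' hze⟩
          obtain ⟨G'', hG'', hs₀, hs'⟩ := h4 G₀ hG₀ G' hG' hint
          have hc₀ : G₀.carrier ⊆ G''.carrier := fun w hw =>
            G''.edges_sub {w} (hs₀ (G₀.atomic w hw)) rfl
          have hc' : G'.carrier ⊆ G''.carrier := fun w hw =>
            G''.edges_sub {w} (hs' (G'.atomic w hw)) rfl
          have hYeT : Y ∪ e ∈ T := by
            refine ⟨Set.union_subset hYX heX, hYne.mono Set.subset_union_left,
              G'', hG'', Set.union_subset (hYG₀.trans hc₀)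
                ((G'.edges_sub e heG').trans hc')⟩
          have := hmax (Y ∪ e) hYeT (Set.subset_union_left)
          simp only [id] at this
          exact heY (this ▸ Set.subset_union_right)
      obtain ⟨G₀, hG₀, hXG₀⟩ := stepA
      -- Step B: G₀ is connected in X
      have hBconn : G₀.ConnectedIn X := by
        intro Y₁ Y₂ hun hdis hn1 hn2
        obtain ⟨e, ⟨heR, heX⟩, hs, ha, hb⟩ := hconn' Y₁ Y₂ hun hdis hn1 hn2
        obtain ⟨G', hG', heG'⟩ := Set.mem_iUnion₂.mp heR
        exact ⟨e, h2 G' hG' e heG' G₀ hG₀ (heX.trans hXG₀), hs, ha, hb⟩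
      obtain ⟨G', hG', hG'car⟩ := h3 G₀ hG₀ X hne hXG₀ hBconn
      have : G' = R.restrict X := by
        apply Hypergraph'.ext'
        · rw [hG'car, restrict_carrier R hXR]
        · ext e
          constructor
          · intro he
            exact ⟨hedge_mem G' hG' he, hG'car ▸ G'.edges_sub e he⟩
          · rintro ⟨heR, heX⟩
            obtain ⟨G'', hG'', heG''⟩ := Set.mem_iUnion₂.mp heR
            exact h2 G'' hG'' e heG'' G' hG' (hG'car ▸ heX)
      exact this ▸ hG'
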